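/- arXiv:2211.14083 — 3 statements merged into one kernel-verified Lean document; each statement's English description precedes it below -/
import Mathlib

section
/- Let OM = (E, L) be an oriented matroid with geometric lattice L(OM), and let X ∈ L(OM) be a modular flat. If σ, τ are covectors with z(σ) = z(τ) = Y and σ|_X = τ|_X, then σ|_{X∨Y} = τ|_{X∨Y}. -/
open Classical

/-- Composition of sign vectors: `(σ ∘ τ)_e = σ_e` if `σ_e ≠ 0`, else `τ_e`. -/
def scomp {E : Type*} (σ τ : E → SignType) : E → SignType :=
  fun e => if σ e = 0 then τ e else σ e

/-- The componentwise partial order on sign vectors induced by `0 < +`, `0 < -`. -/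
def svle {E : Type*} (σ τ : E → SignType) : Prop :=
  ∀ e, σ e = 0 ∨ σ e = τ e

/-- The zero set of a sign vector. -/
def zset {E : Type*} (σ : E → SignType) : Set E := {e | σ e = 0}

/-- The separating set `S(σ,τ) = {e : σ_e = -τ_e ≠ 0}` of two sign vectors. -/
def sep {E : Type*} (σ τ : E → SignType) : Set E :=
  {e | σ e ≠ 0 ∧ σ e = -(τ e)}

/-- The covector axioms for an oriented matroid on the ground set `E`. -/
structure IsOrientedMatroid {E : Type*} (L : Set (E → SignType)) : Prop where
  zero_mem : (fun _ => 0) ∈ L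
  neg_mem : ∀ σ ∈ L, (fun e => -(σ e)) ∈ L
  comp_mem : ∀ σ ∈ L, ∀ τ ∈ L, scomp σ τ ∈ L
  elim : ∀ σ ∈ L, ∀ τ ∈ L, ∀ e ∈ sep σ τ,
    ∃ η ∈ L, η e = 0 ∧ ∀ f ∉ sep σ τ, η f = scomp σ τ f

/-- A tope is a maximal covector. -/
def IsTope {E : Type*} (L : Set (E → SignType)) (T : E → SignType) : Prop :=
  T ∈ L ∧ ∀ σ ∈ L, svle T σ → σ = T

/-- Restriction of a sign vector to a subset `A ⊆ E`. -/
def sres {E : Type*} (A : Set E) (σ : E → SignType) : A → SignType :=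
  fun e => σ e

/-- The set of flats (geometric lattice) of an oriented matroid. -/
def flats {E : Type*} (L : Set (E → SignType)) : Set (Set E) :=
  {X | ∃ σ ∈ L, zset σ = X}

/-- The covectors of the localization of `L` at `X ⊆ E`. -/
def loc {E : Type*} (L : Set (E → SignType)) (X : Set E) : Set (X → SignType) :=
  {σ' | ∃ σ ∈ L, sres X σ = σ'}

/-- Extension of a sign vector on `X` to one on `E` using `α` off `X`. -/
noncomputable def sext {E : Type*} (X : Set E) (α : E → SignType) (σ : X → SignType) : E → SignType :=
  fun e => if h : e ∈ X then σ ⟨e, h⟩ else α e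

/-- The join of two flats: the intersection of all flats containing their union. -/
def fjoin {E : Type*} (L : Set (E → SignType)) (X Y : Set E) : Set E :=
  ⋂₀ {Z | Z ∈ flats L ∧ X ∪ Y ⊆ Z}

/-- A flat `X` is modular if `Z ∨ (X ∧ Y) = (Z ∨ X) ∧ Y` for all flats `Z ⊆ Y`. -/
def IsModularFlat {E : Type*} (L : Set (E → SignType)) (X : Set E) : Prop :=
  X ∈ flats L ∧ ∀ Y Z : Set E, Y ∈ flats L → Z ∈ flats L → Z ⊆ Y →
    fjoin L Z (X ∩ Y) = fjoin L Z X ∩ Y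

theorem modular_flat_res_join {E : Type*} {L : Set (E → SignType)}
    (hL : IsOrientedMatroid L) {X Y : Set E} (hX : IsModularFlat L X)
    {σ τ : E → SignType} (hσ : σ ∈ L) (hτ : τ ∈ L)
    (hzσ : zset σ = Y) (hzτ : zset τ = Y) (h : sres X σ = sres X τ) :
    sres (fjoin L X Y) σ = sres (fjoin L X Y) τ := by
  have hY0 : ∀ f, σ f = 0 ↔ f ∈ Y := fun f => by
    constructor
    · intro hf; rw [← hzσ]; exact hf
    · intro hf; rw [← hzσ] at hf; exact hf
  have hY0τ : ∀ f, τ f = 0 ↔ f ∈ Y := fun f => by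
    constructor
    · intro hf; rw [← hzτ]; exact hf
    · intro hf; rw [← hzτ] at hf; exact hf
  have hcomp : scomp σ τ = σ := by
    funext f
    unfold scomp
    split
    · next h0 => rw [(hY0τ f).2 ((hY0 f).1 h0), h0]
    · rfl
  funext ⟨e, he⟩
  simp only [sres]
  by_contra hne
  -- e is in the separating set
  have hσe : σ e ≠ 0 := by
    intro h0
    exact hne (by rw [h0, (hY0τ e).2 ((hY0 e).1 h0)])
  have hτe : τ e ≠ 0 := by
    intro h0
    exact hσe ((hY0 e).2 ((hY0τ e).1 h0))
  have hesep : e ∈ sep σ τ := by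
    refine ⟨hσe, ?_⟩
    have key : ∀ a b : SignType, a ≠ 0 → b ≠ 0 → a ≠ b → a = -b := by decide
    exact key _ _ hσe hτe hne
  obtain ⟨η, hη, hηe, hηf⟩ := hL.elim σ hσ τ hτ e hesep
  have hZflat : zset η ∈ flats L := ⟨η, hη, rfl⟩
  have hYflat : Y ∈ flats L := ⟨σ, hσ, hzσ⟩
  have hYZ : Y ⊆ zset η := by
    intro f hf
    have hf0 : σ f = 0 := (hY0 f).2 hf
    have hns : f ∉ sep σ τ := fun hs => hs.1 hf0
    show η f = 0
    rw [hηf f hns, hcomp]; exact hf0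
  have hXZ : X ∩ zset η ⊆ Y := by
    rintro f ⟨hfX, hfZ⟩
    have hστ : σ f = τ f := congrFun h ⟨f, hfX⟩
    have hns : f ∉ sep σ τ := by
      rintro ⟨h1, h2⟩
      rw [hστ] at h1 h2
      have key : ∀ a : SignType, a ≠ 0 → a ≠ -a := by decide
      exact key _ h1 h2
    have : η f = σ f := by rw [hηf f hns, hcomp]
    exact (hY0 f).1 (by rw [← this]; exact hfZ)
  have hmod := hX.2 (zset η) Y hZflat hYflat hYZ
  have hL1 : fjoin L Y (X ∩ zset η) = Y := by
    apply Set.Subset.antisymm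
    · exact Set.sInter_subset_of_mem ⟨hYflat, Set.union_subset le_rfl hXZ⟩
    · intro x hx
      exact Set.subset_sInter (fun Z hZ => (Set.subset_union_left).trans hZ.2) hx
  have hjoin_comm : fjoin L Y X = fjoin L X Y := by
    unfold fjoin
    congr 1
    ext Z
    rw [Set.union_comm]
  have heZ : e ∈ zset η := hηe
  have heY : e ∈ Y := by
    rw [← hL1, hmod, hjoin_comm]
    exact ⟨he, heZ⟩
  exact hσe ((hY0 e).2 heY)
end

section
/- Let OM = (E, L) be an oriented matroid with topes T, let B be a tope, and define the tope poset T(OM, B) by R ≤ T iff S(B,R) ⊆ S(B,T). Then every convex subset Q ⊆ T containing B is an order ideal of T(OM, B). -/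
open Classical

/-- The distance between two topes: the number of separating elements. -/
noncomputable def sdist {E : Type*} (σ τ : E → SignType) : ℕ := (sep σ τ).ncard

/-- A set of topes is convex iff it is closed under topes lying "between" two
of its members with respect to the distance. -/
def IsConvexTopes {E : Type*} (L Q : Set (E → SignType)) : Prop :=
  (∀ T ∈ Q, IsTope L T) ∧
  ∀ T ∈ Q, ∀ R ∈ Q, ∀ Q' : E → SignType, IsTope L Q' →
    sdist T Q' + sdist Q' R = sdist T R → Q' ∈ Q

/-- The Salvetti poset: pairs `(σ, T)` with `T` a tope and `σ ≤ T`. -/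
def Sal {E : Type*} (L : Set (E → SignType)) : Set ((E → SignType) × (E → SignType)) :=
  {p | IsTope L p.2 ∧ svle p.1 p.2}

/-- The order relation of the Salvetti poset:
`(σ,T) ≤ (τ,R)` iff `τ ≤ σ` and `σ ∘ R = T`. -/
def salle {E : Type*} (p q : (E → SignType) × (E → SignType)) : Prop :=
  svle q.1 p.1 ∧ scomp p.1 q.2 = p.2

/-- Topes have compatible zero sets. -/
lemma tope_zero {E : Type*} {L : Set (E → SignType)} (hL : IsOrientedMatroid L)
    {P S : E → SignType} (hP : IsTope L P) (hS : S ∈ L) {e : E} (he : P e = 0) :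
    S e = 0 := by
  have hc : scomp P S ∈ L := hL.comp_mem P hP.1 S hS
  have hle : svle P (scomp P S) := by
    intro f
    by_cases h : P f = 0
    · exact Or.inl h
    · exact Or.inr (by simp [scomp, h])
  have heq := hP.2 _ hc hle
  have : scomp P S e = P e := by rw [heq]
  simpa [scomp, he] using this


theorem convex_topes_orderIdeal {E : Type*} [Fintype E] {L : Set (E → SignType)}
    (hL : IsOrientedMatroid L) {Q : Set (E → SignType)} (hQ : IsConvexTopes L Q)
    {B : E → SignType} (hB : B ∈ Q) :
    ∀ T ∈ Q, ∀ R : E → SignType, IsTope L R → sep B R ⊆ sep B T → R ∈ Q := by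
  intro T hT R hR hsub
  have hBt : IsTope L B := hQ.1 B hB
  have hz : ∀ e, B e = 0 → R e = 0 := fun e he => tope_zero hL hBt hR.1 he
  have hz' : ∀ e, R e = 0 → B e = 0 := fun e he => tope_zero hL hR hBt.1 he
  have hunion : sep B T = sep B R ∪ sep R T := by
    ext e
    by_cases hb : B e = 0
    · have hr := hz e hb
      simp [sep, hb, hr]
    · have hr : R e ≠ 0 := fun h => hb (hz' e h)
      constructor
      · rintro ⟨_, hbt⟩
        by_cases hbr : B e = -(R e)
        · exact Or.inl ⟨hb, hbr⟩
        · right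
          refine ⟨hr, ?_⟩
          have hbe : B e = R e := by
            revert hb hr hbr; cases B e <;> cases R e <;> decide
          rw [← hbe, hbt]
      · rintro (⟨_, hbr⟩ | ⟨_, hrt⟩)
        · exact hsub ⟨hb, hbr⟩
        · refine ⟨hb, ?_⟩
          by_cases hbr : B e = -(R e)
          · exfalso
            obtain ⟨_, hbt⟩ := hsub ⟨hb, hbr⟩
            rw [hrt] at hbr
            revert hb hbt hbr; cases B e <;> cases T e <;> decide
          · have hbe : B e = R e := by
              revert hb hr hbr; cases B e <;> cases R e <;> decide
            rw [hbe, hrt]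
  have hdisj : Disjoint (sep B R) (sep R T) := by
    rw [Set.disjoint_left]
    rintro e ⟨hb, hbr⟩ ⟨hr, hrt⟩
    obtain ⟨_, hbt⟩ := hsub ⟨hb, hbr⟩
    rw [hrt] at hbr
    revert hb hbt hbr; cases B e <;> cases T e <;> decide
  have hdist : sdist B R + sdist R T = sdist B T := by
    rw [sdist, sdist, sdist, hunion,
      Set.ncard_union_eq hdisj (Set.toFinite _) (Set.toFinite _)]
  exact hQ.2 B hB T hT R hR hdist
end

section
/- Let OM = (E, L) be an oriented matroid, X a flat, and α a covector with z(α) = X. Then the map ι̃_α from the Salvetti poset of the localization OM|_X to the Salvetti poset of OM, defined by (σ', T') ↦ (ι_α(σ'), ι_α(T')), is a well-defined order preserving section of the induced localization map ρ̃_X : (σ,T) ↦ (σ|_X, (σ∘T)|_X componentwise, i.e., (σ|_X, T|_X)). -/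
open Classical

theorem sal_ext_section {E : Type*} {L : Set (E → SignType)}
    (hL : IsOrientedMatroid L) {α : E → SignType} (hα : α ∈ L) {X : Set E}
    (hX : zset α = X) :
    (∀ p ∈ Sal (loc L X), (sext X α p.1, sext X α p.2) ∈ Sal L) ∧
    (∀ p ∈ Sal (loc L X), ∀ q ∈ Sal (loc L X), salle p q →
      salle (sext X α p.1, sext X α p.2) (sext X α q.1, sext X α q.2)) ∧
    (∀ p ∈ Sal (loc L X), (sres X (sext X α p.1), sres X (sext X α p.2)) = p) := by
  have hz : ∀ e, e ∈ X ↔ α e = 0 := by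
    intro e; rw [← hX]; rfl
  have hXne : ∀ e, e ∉ X → α e ≠ 0 := fun e he h => he ((hz e).mpr h)
  have hmem : ∀ σ' ∈ loc L X, sext X α σ' ∈ L := by
    rintro σ' ⟨σ, hσ, rfl⟩
    have heq : sext X α (sres X σ) = scomp α σ := by
      funext e
      by_cases h : e ∈ X
      · simp [sext, scomp, h, (hz e).mp h, sres]
      · simp [sext, scomp, h, hXne e h]
    rw [heq]; exact hL.comp_mem α hα σ hσ
  have htope : ∀ T', IsTope (loc L X) T' → IsTope L (sext X α T') := by
    rintro T' ⟨hT'L, hT'max⟩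
    refine ⟨hmem _ hT'L, ?_⟩
    intro τ hτ hle
    have hres : sres X τ = T' := by
      apply hT'max _ ⟨τ, hτ, rfl⟩
      intro e
      rcases hle e.1 with h | h
      · left; simpa [sext, e.2] using h
      · right; simpa [sext, sres, e.2] using h
    funext e
    by_cases h : e ∈ X
    · have := congrFun hres ⟨e, h⟩
      simp only [sres] at this
      simp [sext, h, this]
    · rcases hle e with h0 | heq
      · exact absurd (by simpa [sext, h] using h0) (hXne e h)
      · simp only [sext, h, dif_neg] at heq ⊢
        exact heq.symm
  have hsvle : ∀ (a b : X → SignType), svle a b → svle (sext X α a) (sext X α b) := by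
    intro a b hab e
    by_cases h : e ∈ X
    · rcases hab ⟨e, h⟩ with h0 | heq
      · left; simp [sext, h, h0]
      · right; simp [sext, h, heq]
    · right; simp [sext, h]
  refine ⟨?_, ?_, ?_⟩
  · rintro p ⟨hpt, hple⟩
    exact ⟨htope _ hpt, hsvle _ _ hple⟩
  · rintro p hp q hq ⟨hle, hcomp⟩
    refine ⟨hsvle _ _ hle, ?_⟩
    funext e
    by_cases h : e ∈ X
    · have := congrFun hcomp ⟨e, h⟩
      simp only [scomp] at this ⊢
      simpa [sext, h] using this
    · simp [scomp, sext, h, hXne e h]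
  · rintro ⟨p1, p2⟩ -
    simp only [Prod.mk.injEq]
    constructor <;> (funext e; simp [sres, sext, e.2])
end
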